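/- (Lower energy estimate from stability) Let y : [0,T] → Y be such that y(s) is stable at each s, σ : [0,T] → Y* is continuously differentiable, and y is continuous and bounded. Then for every t ∈ [0,T]: W(y(t)) − ⟨σ(t), y(t)⟩ + Diss_D(y,[0,t]) ≥ W(y(0)) − ⟨σ(0), y(0)⟩ − ∫₀^t ⟨σ'(s), y(s)⟩ ds. -/

import Mathlib

open scoped ENNReal

/-- The dissipation of `z` on `[s,t]`: supremum over finite partitions of `[s,t]`
of the sums of `D` of the increments. -/
noncomputable def diss {Y : Type*} [NormedAddCommGroup Y] (D : Y → ℝ)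
    (z : ℝ → Y) (s t : ℝ) : ℝ≥0∞ :=
  ⨆ N : ℕ, ⨆ u : {u : Fin (N + 1) → ℝ // Monotone u ∧ u 0 = s ∧ u (Fin.last N) = t},
    ENNReal.ofReal (∑ i : Fin N, D (z (u.1 i.succ) - z (u.1 i.castSucc)))

/-- For every `ε > 0` there is a partition realizing the lower energy estimate up to `ε`. -/
lemma aux_partition {Y : Type*} [NormedAddCommGroup Y] [InnerProductSpace ℝ Y]
    [FiniteDimensional ℝ Y]
    (T : ℝ) (hT : 0 ≤ T)
    (W : Y → ℝ) (D : Y → ℝ)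
    (σ σ' : ℝ → Y) (hσ : ∀ s : ℝ, HasDerivAt σ (σ' s) s) (hσ'c : Continuous σ')
    (y : ℝ → Y) (hyc : ContinuousOn y (Set.Icc 0 T))
    (hstab : ∀ s ∈ Set.Icc 0 T, ∀ yb : Y,
      W (y s) - (inner ℝ (σ s) (y s) : ℝ) ≤ W yb - (inner ℝ (σ s) yb : ℝ) + D (yb - y s))
    (t : ℝ) (ht0 : 0 ≤ t) (htT : t ≤ T) (ε : ℝ) (hε : 0 < ε) :
    ∃ (N : ℕ) (u : Fin (N + 1) → ℝ), Monotone u ∧ u 0 = 0 ∧ u (Fin.last N) = t ∧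
      W (y 0) - (inner ℝ (σ 0) (y 0) : ℝ)
          - ∫ s in (0 : ℝ)..t, (inner ℝ (σ' s) (y s) : ℝ)
        ≤ W (y t) - (inner ℝ (σ t) (y t) : ℝ)
          + (∑ i : Fin N, D (y (u i.succ) - y (u i.castSucc))) + ε := by
  -- bound on ‖σ'‖ over [0,T]
  obtain ⟨K, hK⟩ := (isCompact_Icc : IsCompact (Set.Icc (0:ℝ) T)).exists_bound_of_continuousOn
    hσ'c.continuousOn
  have hK0 : 0 ≤ K := le_trans (norm_nonneg _) (hK 0 ⟨le_refl 0, hT⟩)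
  have hden : (0:ℝ) < K * T + 1 := by nlinarith
  set ε' : ℝ := ε / (K * T + 1) with hε'def
  have hε' : 0 < ε' := div_pos hε hden
  -- uniform continuity of y on [0,T]
  have huc : UniformContinuousOn y (Set.Icc 0 T) :=
    (isCompact_Icc).uniformContinuousOn_of_continuous hyc
  obtain ⟨δ, hδ, hδy⟩ := (Metric.uniformContinuousOn_iff).1 huc ε' hε'
  -- choose N
  obtain ⟨N₀, hN₀⟩ := exists_nat_gt (t / δ)
  set N : ℕ := max N₀ 1 with hNdef
  have hN1 : 1 ≤ N := le_max_right _ _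
  have hNpos : (0:ℝ) < N := by exact_mod_cast lt_of_lt_of_le Nat.one_pos hN1
  have hNne : (N:ℝ) ≠ 0 := ne_of_gt hNpos
  have htN : t / N < δ := by
    have h1 : t / δ < N := lt_of_lt_of_le hN₀ (by exact_mod_cast le_max_left N₀ 1)
    have h2 : t < δ * N := by
      have := (div_lt_iff₀ hδ).1 h1
      linarith [this]
    rw [div_lt_iff₀ hNpos]
    linarith
  have htNnn : 0 ≤ t / N := div_nonneg ht0 (le_of_lt hNpos)
  -- the partition points
  set s : ℕ → ℝ := fun j => (j : ℝ) * (t / N) with hsdef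
  have hs0 : s 0 = 0 := by simp [hsdef]
  have hsN : s N = t := by
    simp only [hsdef]
    field_simp
  have hsmono : Monotone s := by
    intro i j hij
    exact mul_le_mul_of_nonneg_right (by exact_mod_cast hij) htNnn
  have hstep : ∀ j : ℕ, s (j + 1) - s j = t / N := by
    intro j; simp only [hsdef]; push_cast; ring
  have hsmem : ∀ j : ℕ, j ≤ N → s j ∈ Set.Icc (0:ℝ) T := by
    intro j hj
    constructor
    · exact mul_nonneg (Nat.cast_nonneg j) htNnn
    · calc (j:ℝ) * (t / N) ≤ (N:ℝ) * (t / N) :=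
            mul_le_mul_of_nonneg_right (by exact_mod_cast hj) htNnn
        _ = t := by field_simp
        _ ≤ T := htT
  -- integrability
  set f : ℝ → ℝ := fun x => (inner ℝ (σ' x) (y x) : ℝ) with hfdef
  have hfc : ContinuousOn f (Set.Icc 0 T) := hσ'c.continuousOn.inner hyc
  have hsub : ∀ j : ℕ, j < N → Set.uIcc (s j) (s (j+1)) ⊆ Set.Icc (0:ℝ) T := by
    intro j hj
    rw [Set.uIcc_of_le (hsmono (Nat.le_succ j))]
    exact Set.Icc_subset_Icc (hsmem j (le_of_lt hj)).1 (hsmem (j+1) hj).2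
  have hint : ∀ j : ℕ, j < N → IntervalIntegrable f MeasureTheory.volume (s j) (s (j+1)) := by
    intro j hj
    exact (hfc.mono (hsub j hj)).intervalIntegrable
  have hsplit : ∑ j ∈ Finset.range N, (∫ x in (s j)..(s (j+1)), f x)
      = ∫ x in (0:ℝ)..t, f x := by
    rw [intervalIntegral.sum_integral_adjacent_intervals hint, hs0, hsN]
  -- per-piece estimate
  have hpiece : ∀ j : ℕ, j < N →
      (inner ℝ (σ (s (j+1)) - σ (s j)) (y (s (j+1))) : ℝ)
        ≤ (∫ x in (s j)..(s (j+1)), f x) + (t / N) * (K * ε') := by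
    intro j hj
    set v : Y := y (s (j+1)) with hvdef
    have hσint : IntervalIntegrable σ' MeasureTheory.volume (s j) (s (j+1)) :=
      hσ'c.intervalIntegrable _ _
    have hftc : (∫ x in (s j)..(s (j+1)), σ' x) = σ (s (j+1)) - σ (s j) :=
      intervalIntegral.integral_eq_sub_of_hasDerivAt (fun x _ => hσ x) hσint
    have hLI : (inner ℝ (σ (s (j+1)) - σ (s j)) v : ℝ)
        = ∫ x in (s j)..(s (j+1)), (inner ℝ (σ' x) v : ℝ) := by
      rw [← hftc, real_inner_comm]
      rw [← innerSL_apply_apply (𝕜 := ℝ), ← (innerSL ℝ v).intervalIntegral_comp_comm hσint]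
      apply intervalIntegral.integral_congr
      intro x _
      simp [real_inner_comm]
    have hintv : IntervalIntegrable (fun x => (inner ℝ (σ' x) v : ℝ))
        MeasureTheory.volume (s j) (s (j+1)) :=
      (hσ'c.inner continuous_const).intervalIntegrable _ _
    have hdiff : (∫ x in (s j)..(s (j+1)), (inner ℝ (σ' x) v : ℝ))
        - (∫ x in (s j)..(s (j+1)), f x)
        = ∫ x in (s j)..(s (j+1)), (inner ℝ (σ' x) (v - y x) : ℝ) := by
      rw [← intervalIntegral.integral_sub hintv (hint j hj)]
      congr 1
      ext x
      simp [hfdef, inner_sub_right]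
    have hbound : ‖∫ x in (s j)..(s (j+1)), (inner ℝ (σ' x) (v - y x) : ℝ)‖
        ≤ (K * ε') * |s (j+1) - s j| := by
      apply intervalIntegral.norm_integral_le_of_norm_le_const
      intro x hx
      have hxmem : x ∈ Set.Icc (0:ℝ) T := by
        apply hsub j hj
        exact Set.uIoc_subset_uIcc hx
      rw [Set.uIoc_of_le (hsmono (Nat.le_succ j))] at hx
      have hdx : dist (s (j+1)) x < δ := by
        rw [Real.dist_eq, abs_of_nonneg (by linarith [hx.1, hx.2])]
        calc s (j+1) - x ≤ s (j+1) - s j := by linarith [hx.1]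
          _ = t / N := hstep j
          _ < δ := htN
      have hyδ : dist (y (s (j+1))) (y x) < ε' :=
        hδy (s (j+1)) (hsmem (j+1) hj) x hxmem hdx
      have hvy : ‖v - y x‖ ≤ ε' := by
        rw [hvdef, ← dist_eq_norm]
        exact le_of_lt hyδ
      calc ‖(inner ℝ (σ' x) (v - y x) : ℝ)‖
          ≤ ‖σ' x‖ * ‖v - y x‖ := norm_inner_le_norm _ _
        _ ≤ K * ε' := mul_le_mul (hK x hxmem) hvy (norm_nonneg _) hK0
    have habs : |s (j+1) - s j| = t / N := by
      rw [hstep j, abs_of_nonneg htNnn]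
    rw [hLI]
    have := (abs_le.1 ((Real.norm_eq_abs _) ▸ hbound)).2
    rw [habs] at this
    have h2 : (∫ x in (s j)..(s (j+1)), (inner ℝ (σ' x) v : ℝ))
        - (∫ x in (s j)..(s (j+1)), f x) ≤ K * ε' * (t / N) := hdiff ▸ this
    linarith
  -- telescoping via stability
  set g : ℕ → ℝ := fun j => W (y (s j)) - (inner ℝ (σ (s j)) (y (s j)) : ℝ) with hgdef
  have htel : g 0 - g N
      ≤ ∑ j ∈ Finset.range N,
          ((inner ℝ (σ (s (j+1)) - σ (s j)) (y (s (j+1))) : ℝ)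
            + D (y (s (j+1)) - y (s j))) := by
    rw [← Finset.sum_range_sub' g N]
    apply Finset.sum_le_sum
    intro j hj
    have hjN := Finset.mem_range.1 hj
    have hst := hstab (s j) (hsmem j (le_of_lt hjN)) (y (s (j+1)))
    simp only [hgdef, inner_sub_left]
    linarith
  -- sum it all up
  have hsum1 : ∑ j ∈ Finset.range N,
      (inner ℝ (σ (s (j+1)) - σ (s j)) (y (s (j+1))) : ℝ)
      ≤ (∫ x in (0:ℝ)..t, f x) + t * (K * ε') := by
    calc ∑ j ∈ Finset.range N, (inner ℝ (σ (s (j+1)) - σ (s j)) (y (s (j+1))) : ℝ)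
        ≤ ∑ j ∈ Finset.range N, ((∫ x in (s j)..(s (j+1)), f x) + (t / N) * (K * ε')) :=
          Finset.sum_le_sum (fun j hj => hpiece j (Finset.mem_range.1 hj))
      _ = (∑ j ∈ Finset.range N, ∫ x in (s j)..(s (j+1)), f x)
            + N * ((t / N) * (K * ε')) := by
          rw [Finset.sum_add_distrib, Finset.sum_const, Finset.card_range, nsmul_eq_mul]
      _ = (∫ x in (0:ℝ)..t, f x) + t * (K * ε') := by
          rw [hsplit]
          congr 1
          field_simp
  have hεbound : t * (K * ε') ≤ ε := by
    have h1 : t * K ≤ K * T + 1 := by nlinarith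
    have : t * (K * ε') = (t * K) * ε / (K * T + 1) := by
      rw [hε'def]; ring
    rw [this, div_le_iff₀ hden]
    nlinarith [mul_nonneg ht0 hK0]
  -- assemble the partition
  refine ⟨N, fun i => s i, ?_, ?_, ?_, ?_⟩
  · intro i j hij
    exact hsmono (by exact_mod_cast hij)
  · simpa using hs0
  · simpa using hsN
  · have hDsum : (∑ i : Fin N, D (y (s (i.succ : ℕ)) - y (s (i.castSucc : ℕ))))
        = ∑ j ∈ Finset.range N, D (y (s (j+1)) - y (s j)) := by
      rw [← Fin.sum_univ_eq_sum_range (fun j => D (y (s (j+1)) - y (s j))) N]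
      apply Finset.sum_congr rfl
      intro i _
      simp [Fin.val_succ, Fin.coe_castSucc]
    simp only [hDsum]
    have hsumsplit : ∑ j ∈ Finset.range N,
        ((inner ℝ (σ (s (j+1)) - σ (s j)) (y (s (j+1))) : ℝ) + D (y (s (j+1)) - y (s j)))
        = (∑ j ∈ Finset.range N, (inner ℝ (σ (s (j+1)) - σ (s j)) (y (s (j+1))) : ℝ))
          + ∑ j ∈ Finset.range N, D (y (s (j+1)) - y (s j)) :=
      Finset.sum_add_distrib
    have hg0 : g 0 = W (y 0) - (inner ℝ (σ 0) (y 0) : ℝ) := by rw [hgdef]; simp [hs0]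
    have hgN : g N = W (y t) - (inner ℝ (σ t) (y t) : ℝ) := by rw [hgdef]; simp [hsN]
    have := htel
    rw [hsumsplit, hg0, hgN] at this
    have hf : (∫ x in (0:ℝ)..t, (inner ℝ (σ' x) (y x) : ℝ)) = ∫ x in (0:ℝ)..t, f x := rfl
    rw [hf]
    linarith

/-- Lower energy estimate from stability. -/
theorem stmt8 {Y : Type*} [NormedAddCommGroup Y] [InnerProductSpace ℝ Y]
    [FiniteDimensional ℝ Y]
    (T : ℝ) (hT : 0 ≤ T)
    (W : Y → ℝ) (D : Y → ℝ) (hDnn : ∀ a, 0 ≤ D a) (hD0 : D 0 = 0)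
    (σ σ' : ℝ → Y) (hσ : ∀ s : ℝ, HasDerivAt σ (σ' s) s) (hσ'c : Continuous σ')
    (y : ℝ → Y) (hyc : ContinuousOn y (Set.Icc 0 T))
    (M : ℝ) (hM : ∀ t ∈ Set.Icc 0 T, ‖y t‖ ≤ M)
    (hstab : ∀ s ∈ Set.Icc 0 T, ∀ yb : Y,
      W (y s) - (inner ℝ (σ s) (y s) : ℝ) ≤ W yb - (inner ℝ (σ s) yb : ℝ) + D (yb - y s)) :
    ∀ t ∈ Set.Icc 0 T,
      ((W (y 0) - (inner ℝ (σ 0) (y 0) : ℝ)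
          - ∫ s in (0 : ℝ)..t, (inner ℝ (σ' s) (y s) : ℝ) : ℝ) : EReal)
        ≤ ((W (y t) - (inner ℝ (σ t) (y t) : ℝ) : ℝ) : EReal) + (diss D y 0 t : EReal) := by
  intro t ht
  obtain ⟨ht0, htT⟩ := ht
  by_cases hd : diss D y 0 t = ⊤
  · rw [hd, EReal.coe_ennreal_top, EReal.add_top_of_ne_bot (EReal.coe_ne_bot _)]
    exact le_top
  · set r : ℝ := (diss D y 0 t).toReal with hrdef
    have hr0 : 0 ≤ r := ENNReal.toReal_nonneg
    have hcoe : (diss D y 0 t : EReal) = ((r : ℝ) : EReal) := by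
      rw [hrdef, ← ENNReal.ofReal_toReal hd, ENNReal.toReal_ofReal ENNReal.toReal_nonneg]
      rw [EReal.coe_ennreal_ofReal, max_eq_left ENNReal.toReal_nonneg]
    rw [hcoe, ← EReal.coe_add, EReal.coe_le_coe_iff]
    apply le_of_forall_pos_le_add
    intro ε hε
    obtain ⟨N, u, humono, hu0, hul, hineq⟩ :=
      aux_partition T hT W D σ σ' hσ hσ'c y hyc hstab t ht0 htT ε hε
    have hSle : (∑ i : Fin N, D (y (u i.succ) - y (u i.castSucc))) ≤ r := by
      have hle : ENNReal.ofReal (∑ i : Fin N, D (y (u i.succ) - y (u i.castSucc)))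
          ≤ diss D y 0 t := by
        apply le_iSup_of_le N
        exact le_iSup_of_le (⟨u, humono, hu0, hul⟩ :
          {u : Fin (N + 1) → ℝ // Monotone u ∧ u 0 = 0 ∧ u (Fin.last N) = t}) le_rfl
      exact (ENNReal.ofReal_le_iff_le_toReal hd).1 hle
    linarith
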